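/- Let W₁, W₂ : [0,1]² → ℝ be integrable, and suppose W₂ is P-measurable for a finite measurable partition P of [0,1]. Then ‖W₁ − S_P W₁‖_□ ≤ 2‖W₁ − W₂‖_□, where S_P W₁ is the stepping of W₁ along P. -/

import Mathlib

open MeasureTheory

/-- The cut norm of a kernel on `[0,1]²`. -/
noncomputable def cutNorm (W : ℝ → ℝ → ℝ) : ℝ :=
  sSup {r : ℝ | ∃ S T : Set ℝ, S ⊆ Set.Icc 0 1 ∧ T ⊆ Set.Icc 0 1 ∧
    MeasurableSet S ∧ MeasurableSet T ∧
    r = |∫ x in S, ∫ y in T, W x y|}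

/-- `P` is a finite measurable partition of `[0,1]` into sets of positive measure. -/
def IsPartition (P : Finset (Set ℝ)) : Prop :=
  (∀ S ∈ P, MeasurableSet S ∧ 0 < volume S) ∧
  (⋃₀ (P : Set (Set ℝ))) = Set.Icc 0 1 ∧
  ∀ S ∈ P, ∀ T ∈ P, S ≠ T → Disjoint S T

open Classical in
/-- The stepping of a kernel along a finite partition `P`. -/
noncomputable def stepping (P : Finset (Set ℝ)) (W : ℝ → ℝ → ℝ) (x y : ℝ) : ℝ :=
  ∑ S ∈ P, ∑ T ∈ P,
    if x ∈ S ∧ y ∈ T then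
      (∫ s in S, ∫ t in T, W s t) / ((volume S).toReal * (volume T).toReal)
    else 0

section Auxiliary

set_option maxHeartbeats 1000000

local notation "I01" => Set.Icc (0:ℝ) 1

lemma prodRestrict {f : ℝ × ℝ → ℝ} {A B : Set ℝ} (h : IntegrableOn f (A ×ˢ B)) :
    Integrable f ((volume.restrict A).prod (volume.restrict B)) := by
  rwa [Measure.prod_restrict, ← Measure.volume_eq_prod]

lemma marginal_int {f : ℝ × ℝ → ℝ} {A B : Set ℝ} (h : IntegrableOn f (A ×ˢ B)) :
    IntegrableOn (fun x => ∫ y in B, f (x, y)) A := (prodRestrict h).integral_prod_left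

lemma section_ae {f : ℝ × ℝ → ℝ} {A B : Set ℝ} (h : IntegrableOn f (A ×ˢ B)) :
    ∀ᵐ x ∂(volume.restrict A), IntegrableOn (fun y => f (x, y)) B := (prodRestrict h).prod_right_ae

lemma vol_ne_top {A : Set ℝ} (hA : A ⊆ I01) : volume A ≠ ⊤ := by
  refine ne_top_of_le_ne_top ?_ (measure_mono hA)
  simp [Real.volume_Icc]

lemma iter_add {f g : ℝ × ℝ → ℝ} {A B : Set ℝ} (hf : IntegrableOn f (A ×ˢ B))
    (hg : IntegrableOn g (A ×ˢ B)) :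
    ∫ x in A, ∫ y in B, (f (x, y) + g (x, y)) =
      (∫ x in A, ∫ y in B, f (x, y)) + ∫ x in A, ∫ y in B, g (x, y) := by
  rw [← integral_add (marginal_int hf) (marginal_int hg)]
  refine integral_congr_ae ?_
  filter_upwards [section_ae hf, section_ae hg] with x hfx hgx
  exact integral_add hfx hgx

lemma iter_sub' {f g : ℝ × ℝ → ℝ} {A B : Set ℝ} (hf : IntegrableOn f (A ×ˢ B))
    (hg : IntegrableOn g (A ×ˢ B)) :
    ∫ x in A, ∫ y in B, (f (x, y) - g (x, y)) =
      (∫ x in A, ∫ y in B, f (x, y)) - ∫ x in A, ∫ y in B, g (x, y) := by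
  rw [← integral_sub (marginal_int hf) (marginal_int hg)]
  refine integral_congr_ae ?_
  filter_upwards [section_ae hf, section_ae hg] with x hfx hgx
  exact integral_sub hfx hgx

lemma cut_bound {f : ℝ × ℝ → ℝ} (hf : IntegrableOn f (I01 ×ˢ I01)) {S T : Set ℝ}
    (hS : S ⊆ I01) (hT : T ⊆ I01) :
    |∫ x in S, ∫ y in T, f (x, y)| ≤ ∫ x in I01, ∫ y in I01, |f (x, y)| := by
  set g : ℝ → ℝ := fun x => ∫ y in T, f (x, y) with hg
  set h : ℝ → ℝ := fun x => ∫ y in I01, |f (x, y)| with hh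
  have hfST : IntegrableOn f (S ×ˢ T) := hf.mono_set (Set.prod_mono hS hT)
  have habs : IntegrableOn (fun p => |f p|) (I01 ×ˢ I01) := hf.abs
  have hgS : IntegrableOn g S := marginal_int hfST
  have hhI : IntegrableOn h I01 := marginal_int habs
  have hhS : IntegrableOn h S := hhI.mono_set hS
  have hbound : ∀ᵐ x ∂(volume.restrict S), |g x| ≤ h x := by
    have := section_ae hf
    have h2 : ∀ᵐ x ∂(volume.restrict S), IntegrableOn (fun y => f (x, y)) I01 :=
      (ae_mono (Measure.restrict_mono hS le_rfl)) this
    filter_upwards [h2] with x hx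
    calc |g x| ≤ ∫ y in T, |f (x, y)| := by
          simpa [Real.norm_eq_abs] using
            norm_integral_le_integral_norm (μ := volume.restrict T) (fun y => f (x, y))
      _ ≤ ∫ y in I01, |f (x, y)| := by
          refine setIntegral_mono_set hx.abs ?_ (HasSubset.Subset.eventuallyLE hT)
          exact Filter.Eventually.of_forall fun y => abs_nonneg _
  have s1 : |∫ x in S, g x| ≤ ∫ x in S, |g x| := by
    simpa [Real.norm_eq_abs] using
      norm_integral_le_integral_norm (μ := volume.restrict S) g
  have s2 : ∫ x in S, |g x| ≤ ∫ x in S, h x := integral_mono_ae hgS.abs hhS hbound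
  have s3 : ∫ x in S, h x ≤ ∫ x in I01, h x := by
    refine setIntegral_mono_set hhI ?_ (HasSubset.Subset.eventuallyLE hS)
    exact Filter.Eventually.of_forall fun x => integral_nonneg fun y => abs_nonneg _
  exact s1.trans (s2.trans s3)

lemma bddAbove_cutSet (W : ℝ → ℝ → ℝ)
    (hW : IntegrableOn (fun p : ℝ × ℝ => W p.1 p.2) (I01 ×ˢ I01)) :
    BddAbove {r : ℝ | ∃ S T : Set ℝ, S ⊆ Set.Icc 0 1 ∧ T ⊆ Set.Icc 0 1 ∧
      MeasurableSet S ∧ MeasurableSet T ∧ r = |∫ x in S, ∫ y in T, W x y|} := by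
  refine ⟨∫ x in I01, ∫ y in I01, |W x y|, ?_⟩
  rintro r ⟨S, T, hS, hT, _, _, rfl⟩
  exact cut_bound hW hS hT

lemma le_cutNorm (W : ℝ → ℝ → ℝ)
    (hW : IntegrableOn (fun p : ℝ × ℝ => W p.1 p.2) (I01 ×ˢ I01))
    {S T : Set ℝ} (hS : S ⊆ I01) (hT : T ⊆ I01) (hSm : MeasurableSet S)
    (hTm : MeasurableSet T) :
    |∫ x in S, ∫ y in T, W x y| ≤ cutNorm W :=
  le_csSup (bddAbove_cutSet W hW) ⟨S, T, hS, hT, hSm, hTm, rfl⟩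

lemma cutNorm_nonneg (W : ℝ → ℝ → ℝ)
    (hW : IntegrableOn (fun p : ℝ × ℝ => W p.1 p.2) (I01 ×ˢ I01)) :
    0 ≤ cutNorm W := by
  refine le_csSup (bddAbove_cutSet W hW) ⟨∅, ∅, by simp, by simp,
    MeasurableSet.empty, MeasurableSet.empty, by simp⟩

lemma cutNorm_le_of (W : ℝ → ℝ → ℝ) {c : ℝ} (hc : 0 ≤ c)
    (h : ∀ S T : Set ℝ, S ⊆ I01 → T ⊆ I01 → MeasurableSet S → MeasurableSet T →
      |∫ x in S, ∫ y in T, W x y| ≤ c) :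
    cutNorm W ≤ c := by
  refine Real.sSup_le ?_ hc
  rintro r ⟨S, T, hS, hT, hSm, hTm, rfl⟩
  exact h S T hS hT hSm hTm

lemma vertex {ι : Type*} [DecidableEq ι] (f lam : ι → ℝ) (P : Finset ι)
    (hlam : ∀ i ∈ P, lam i ∈ Set.Icc (0:ℝ) 1) :
    ∀ c : ℝ, ∃ Q ⊆ P, |c + ∑ i ∈ P, lam i * f i| ≤ |c + ∑ i ∈ Q, f i| := by
  induction P using Finset.induction_on with
  | empty => exact fun c => ⟨∅, by simp⟩
  | @insert a P' ha ih =>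
    intro c
    obtain ⟨Q, hQ, hb⟩ := (ih (fun i hi => hlam i (Finset.mem_insert_of_mem hi)))
      (c + lam a * f a)
    have haQ : a ∉ Q := fun h => ha (hQ h)
    obtain ⟨ht0, ht1⟩ := hlam a (Finset.mem_insert_self a P')
    set t := lam a
    set u := c + ∑ i ∈ Q, f i with hu
    set v := c + f a + ∑ i ∈ Q, f i with hv
    have key : |c + t * f a + ∑ i ∈ Q, f i| ≤ max |u| |v| := by
      have he : c + t * f a + ∑ i ∈ Q, f i = (1 - t) * u + t * v := by
        rw [hu, hv]; ring
      rw [he]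
      calc |(1 - t) * u + t * v| ≤ |(1 - t) * u| + |t * v| := abs_add_le _ _
        _ = (1 - t) * |u| + t * |v| := by
            rw [abs_mul, abs_mul, abs_of_nonneg (by linarith), abs_of_nonneg ht0]
        _ ≤ (1 - t) * max |u| |v| + t * max |u| |v| := by
            refine add_le_add ?_ ?_
            · exact mul_le_mul_of_nonneg_left (le_max_left _ _) (by linarith)
            · exact mul_le_mul_of_nonneg_left (le_max_right _ _) ht0
        _ = max |u| |v| := by ring
    rcases le_total |v| |u| with h | h
    · refine ⟨Q, hQ.trans (Finset.subset_insert a P'), ?_⟩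
      rw [Finset.sum_insert ha, ← add_assoc]
      exact hb.trans (key.trans (max_le le_rfl h))
    · refine ⟨insert a Q, Finset.insert_subset_insert a hQ, ?_⟩
      rw [Finset.sum_insert ha, Finset.sum_insert haQ, ← add_assoc, ← add_assoc]
      exact hb.trans (key.trans (max_le h le_rfl))

lemma iter_biUnion {f : ℝ × ℝ → ℝ} (hf : IntegrableOn f (I01 ×ˢ I01))
    (Q R : Finset (Set ℝ))
    (hQm : ∀ A ∈ Q, MeasurableSet A) (hQs : ∀ A ∈ Q, A ⊆ I01)
    (hQd : Set.Pairwise (↑Q) (Disjoint (α := Set ℝ)))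
    (hRm : ∀ B ∈ R, MeasurableSet B) (hRs : ∀ B ∈ R, B ⊆ I01)
    (hRd : Set.Pairwise (↑R) (Disjoint (α := Set ℝ))) :
    ∫ x in ⋃ A ∈ Q, A, ∫ y in ⋃ B ∈ R, B, f (x, y) =
      ∑ A ∈ Q, ∑ B ∈ R, ∫ x in A, ∫ y in B, f (x, y) := by
  have hUR : (⋃ B ∈ R, B) ⊆ I01 := Set.iUnion₂_subset hRs
  have hg : ∀ A ∈ Q, IntegrableOn (fun x => ∫ y in ⋃ B ∈ R, B, f (x, y)) A := fun A hA =>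
    marginal_int (hf.mono_set (Set.prod_mono (hQs A hA) hUR))
  rw [integral_biUnion_finset Q hQm hQd hg]
  refine Finset.sum_congr rfl fun A hA => ?_
  have hsec : ∀ᵐ x ∂(volume.restrict A), IntegrableOn (fun y => f (x, y)) I01 :=
    section_ae (hf.mono_set (Set.prod_mono (hQs A hA) subset_rfl))
  have step : ∫ x in A, ∫ y in ⋃ B ∈ R, B, f (x, y)
      = ∫ x in A, ∑ B ∈ R, ∫ y in B, f (x, y) := by
    refine integral_congr_ae ?_
    filter_upwards [hsec] with x hx
    exact integral_biUnion_finset R hRm hRd fun B hB => hx.mono_set (hRs B hB)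
  rw [step]
  exact integral_finset_sum R fun B hB =>
    marginal_int (hf.mono_set (Set.prod_mono (hQs A hA) (hRs B hB)))

lemma iter_biUnion' (W : ℝ → ℝ → ℝ)
    (hf : IntegrableOn (fun p : ℝ × ℝ => W p.1 p.2) (I01 ×ˢ I01))
    (Q R : Finset (Set ℝ))
    (hQm : ∀ A ∈ Q, MeasurableSet A) (hQs : ∀ A ∈ Q, A ⊆ I01)
    (hQd : Set.Pairwise (↑Q) (Disjoint (α := Set ℝ)))
    (hRm : ∀ B ∈ R, MeasurableSet B) (hRs : ∀ B ∈ R, B ⊆ I01)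
    (hRd : Set.Pairwise (↑R) (Disjoint (α := Set ℝ))) :
    ∫ x in ⋃ A ∈ Q, A, ∫ y in ⋃ B ∈ R, B, W x y =
      ∑ A ∈ Q, ∑ B ∈ R, ∫ x in A, ∫ y in B, W x y :=
  iter_biUnion hf Q R hQm hQs hQd hRm hRs hRd

open Classical in
lemma stepping_setIntegral (P : Finset (Set ℝ)) (hPm : ∀ A ∈ P, MeasurableSet A)
    (W : ℝ → ℝ → ℝ) {S T : Set ℝ} (hS : volume S ≠ ⊤) (hT : volume T ≠ ⊤) :
    ∫ x in S, ∫ y in T, stepping P W x y =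
      ∑ A ∈ P, ∑ B ∈ P, (volume (A ∩ S)).toReal * ((volume (B ∩ T)).toReal *
        ((∫ s in A, ∫ t in B, W s t) / ((volume A).toReal * (volume B).toReal))) := by
  set d : Set ℝ → Set ℝ → ℝ := fun A B =>
    (∫ s in A, ∫ t in B, W s t) / ((volume A).toReal * (volume B).toReal) with hd
  have hindB : ∀ (B : Set ℝ), B ∈ P → ∀ (c : ℝ),
      (fun y => if y ∈ B then c else 0) = B.indicator (fun _ => c) := by
    intro B _ c; ext y; simp [Set.indicator]
  have int_inner : ∀ (x : ℝ), ∀ A ∈ P, ∀ B ∈ P,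
      IntegrableOn (fun y => if x ∈ A ∧ y ∈ B then d A B else 0) T := by
    intro x A hA B hB
    by_cases hx : x ∈ A
    · simp only [hx, true_and]
      rw [hindB B hB]
      exact (integrableOn_const hT).indicator (hPm B hB)
    · simp only [hx, false_and, if_false]
      exact integrableOn_const hT
  have inner : ∀ x : ℝ, ∫ y in T, stepping P W x y =
      ∑ A ∈ P, ∑ B ∈ P, (if x ∈ A then (volume (B ∩ T)).toReal * d A B else 0) := by
    intro x
    have : (fun y => stepping P W x y) =
        fun y => ∑ A ∈ P, ∑ B ∈ P, (if x ∈ A ∧ y ∈ B then d A B else 0) := by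
      funext y; simp only [stepping, hd]
    rw [this, integral_finset_sum P (fun A hA =>
      integrable_finset_sum P (fun B hB => int_inner x A hA B hB))]
    refine Finset.sum_congr rfl fun A hA => ?_
    rw [integral_finset_sum P (fun B hB => int_inner x A hA B hB)]
    refine Finset.sum_congr rfl fun B hB => ?_
    by_cases hx : x ∈ A
    · simp only [hx, true_and, if_true]
      rw [hindB B hB, integral_indicator_const _ (hPm B hB), measureReal_restrict_apply (hPm B hB),
        smul_eq_mul, measureReal_def]
    · simp [hx]
  have int_outer : ∀ A ∈ P, ∀ B ∈ P,
      IntegrableOn (fun x => if x ∈ A then (volume (B ∩ T)).toReal * d A B else 0) S := by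
    intro A hA B hB
    have : (fun x => if x ∈ A then (volume (B ∩ T)).toReal * d A B else 0)
        = A.indicator (fun _ => (volume (B ∩ T)).toReal * d A B) := by
      ext x; simp [Set.indicator]
    rw [this]
    exact (integrableOn_const hS).indicator (hPm A hA)
  calc ∫ x in S, ∫ y in T, stepping P W x y
      = ∫ x in S, ∑ A ∈ P, ∑ B ∈ P, (if x ∈ A then (volume (B ∩ T)).toReal * d A B else 0) :=
        integral_congr_ae (Filter.Eventually.of_forall fun x => inner x)
    _ = ∑ A ∈ P, ∑ B ∈ P, (volume (A ∩ S)).toReal * ((volume (B ∩ T)).toReal * d A B) := by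
        rw [integral_finset_sum P (fun A hA =>
          integrable_finset_sum P (fun B hB => int_outer A hA B hB))]
        refine Finset.sum_congr rfl fun A hA => ?_
        rw [integral_finset_sum P (fun B hB => int_outer A hA B hB)]
        refine Finset.sum_congr rfl fun B hB => ?_
        have : (fun x => if x ∈ A then (volume (B ∩ T)).toReal * d A B else 0)
            = A.indicator (fun _ => (volume (B ∩ T)).toReal * d A B) := by
          ext x; simp [Set.indicator]
        rw [this, integral_indicator_const _ (hPm A hA), measureReal_restrict_apply (hPm A hA),
          smul_eq_mul, measureReal_def]

open Classical in
lemma stepping_sub (P : Finset (Set ℝ)) (f g : ℝ → ℝ → ℝ)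
    (hf : ∀ A ∈ P, ∀ B ∈ P, IntegrableOn (fun p : ℝ × ℝ => f p.1 p.2) (A ×ˢ B))
    (hg : ∀ A ∈ P, ∀ B ∈ P, IntegrableOn (fun p : ℝ × ℝ => g p.1 p.2) (A ×ˢ B))
    (x y : ℝ) :
    stepping P (fun a b => f a b - g a b) x y = stepping P f x y - stepping P g x y := by
  simp only [stepping, ← Finset.sum_sub_distrib]
  refine Finset.sum_congr rfl fun A hA => Finset.sum_congr rfl fun B hB => ?_
  by_cases hxy : x ∈ A ∧ y ∈ B
  · simp only [hxy, if_true]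
    rw [iter_sub' (hf A hA B hB) (hg A hA B hB), sub_div]
    simp
  · simp [hxy]

open Classical in
lemma stepping_eq (P : Finset (Set ℝ)) (hPm : ∀ A ∈ P, MeasurableSet A)
    (hPsub : ∀ A ∈ P, A ⊆ I01) (hPpos : ∀ A ∈ P, 0 < volume A)
    (hcover : ⋃₀ (P : Set (Set ℝ)) = I01)
    (hdisj : ∀ S ∈ P, ∀ T ∈ P, S ≠ T → Disjoint S T)
    (W₂ : ℝ → ℝ → ℝ)
    (hstep : ∀ S ∈ P, ∀ T ∈ P, ∀ x ∈ S, ∀ x' ∈ S, ∀ y ∈ T, ∀ y' ∈ T, W₂ x y = W₂ x' y')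
    {x y : ℝ} (hx : x ∈ I01) (hy : y ∈ I01) :
    stepping P W₂ x y = W₂ x y := by
  have hx' : x ∈ ⋃₀ (P : Set (Set ℝ)) := hcover ▸ hx
  have hy' : y ∈ ⋃₀ (P : Set (Set ℝ)) := hcover ▸ hy
  obtain ⟨A₀, hA₀, hxA₀⟩ := Set.mem_sUnion.1 hx'
  obtain ⟨B₀, hB₀, hyB₀⟩ := Set.mem_sUnion.1 hy'
  rw [Finset.mem_coe] at hA₀ hB₀
  unfold stepping
  have hAvol : (volume A₀).toReal ≠ 0 :=
    (ENNReal.toReal_pos (hPpos A₀ hA₀).ne' (vol_ne_top (hPsub A₀ hA₀))).ne'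
  have hBvol : (volume B₀).toReal ≠ 0 :=
    (ENNReal.toReal_pos (hPpos B₀ hB₀).ne' (vol_ne_top (hPsub B₀ hB₀))).ne'
  rw [Finset.sum_eq_single_of_mem A₀ hA₀ (fun A hA hne => Finset.sum_eq_zero fun B hB => by
    have hxA : x ∉ A := fun hxa => Set.disjoint_left.1 (hdisj A hA A₀ hA₀ hne) hxa hxA₀
    simp [hxA])]
  rw [Finset.sum_eq_single_of_mem B₀ hB₀ (fun B hB hne => by
    have hyB : y ∉ B := fun hyb => Set.disjoint_left.1 (hdisj B hB B₀ hB₀ hne) hyb hyB₀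
    simp [hyB])]
  have h1 : ∀ s ∈ A₀, ∫ t in B₀, W₂ s t = (volume B₀).toReal * W₂ x y := by
    intro s hs
    rw [setIntegral_congr_fun (hPm B₀ hB₀)
      (fun t ht => hstep A₀ hA₀ B₀ hB₀ s hs x hxA₀ t ht y hyB₀), setIntegral_const, smul_eq_mul, measureReal_def]
  have h2 : ∫ s in A₀, ∫ t in B₀, W₂ s t = (volume A₀).toReal * ((volume B₀).toReal * W₂ x y) := by
    rw [setIntegral_congr_fun (hPm A₀ hA₀) h1, setIntegral_const, smul_eq_mul, measureReal_def]
  rw [if_pos ⟨hxA₀, hyB₀⟩, h2]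
  field_simp

end Auxiliary

set_option maxHeartbeats 4000000 in
theorem stmt11 (P : Finset (Set ℝ)) (hP : IsPartition P) (W₁ W₂ : ℝ → ℝ → ℝ)
    (hW₁meas : Measurable fun p : ℝ × ℝ => W₁ p.1 p.2)
    (hW₂meas : Measurable fun p : ℝ × ℝ => W₂ p.1 p.2)
    (hW₁int : IntegrableOn (fun p : ℝ × ℝ => W₁ p.1 p.2) (Set.Icc 0 1 ×ˢ Set.Icc 0 1))
    (hW₂int : IntegrableOn (fun p : ℝ × ℝ => W₂ p.1 p.2) (Set.Icc 0 1 ×ˢ Set.Icc 0 1))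
    (hW₂step : ∀ S ∈ P, ∀ T ∈ P, ∀ x ∈ S, ∀ x' ∈ S, ∀ y ∈ T, ∀ y' ∈ T,
      W₂ x y = W₂ x' y') :
    cutNorm (fun x y => W₁ x y - stepping P W₁ x y)
      ≤ 2 * cutNorm (fun x y => W₁ x y - W₂ x y) := by
  classical
  obtain ⟨hPm', hcover, hdisj⟩ := hP
  have hPm : ∀ A ∈ P, MeasurableSet A := fun A hA => (hPm' A hA).1
  have hPpos : ∀ A ∈ P, 0 < volume A := fun A hA => (hPm' A hA).2
  have hPsub : ∀ A ∈ P, A ⊆ Set.Icc (0:ℝ) 1 := fun A hA => by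
    rw [← hcover]; exact Set.subset_sUnion_of_mem (Finset.mem_coe.2 hA)
  have hUint : IntegrableOn (fun p : ℝ × ℝ => W₁ p.1 p.2 - W₂ p.1 p.2)
      (Set.Icc 0 1 ×ˢ Set.Icc 0 1) := hW₁int.sub hW₂int
  have hM0 : 0 ≤ cutNorm (fun x y => W₁ x y - W₂ x y) := cutNorm_nonneg _ hUint
  refine cutNorm_le_of _ (by linarith) ?_
  intro S T hS hT hSm hTm
  show |∫ x in S, ∫ y in T, (W₁ x y - stepping P W₁ x y)|
      ≤ 2 * cutNorm (fun x y => W₁ x y - W₂ x y)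
  set W' : ℝ → ℝ → ℝ := fun a b => W₂ a b - W₁ a b with hW'def
  have hW'int : IntegrableOn (fun p : ℝ × ℝ => W' p.1 p.2)
      (Set.Icc 0 1 ×ˢ Set.Icc 0 1) := hW₂int.sub hW₁int
  have hpieceW₁ : ∀ A ∈ P, ∀ B ∈ P, IntegrableOn (fun p : ℝ × ℝ => W₁ p.1 p.2) (A ×ˢ B) :=
    fun A hA B hB => hW₁int.mono_set (Set.prod_mono (hPsub A hA) (hPsub B hB))
  have hpieceW₂ : ∀ A ∈ P, ∀ B ∈ P, IntegrableOn (fun p : ℝ × ℝ => W₂ p.1 p.2) (A ×ˢ B) :=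
    fun A hA B hB => hW₂int.mono_set (Set.prod_mono (hPsub A hA) (hPsub B hB))
  have hptw : ∀ x ∈ S, ∀ y ∈ T,
      W₁ x y - stepping P W₁ x y = (W₁ x y - W₂ x y) + stepping P W' x y := by
    intro x hx y hy
    have h1 : stepping P (fun a b => W₂ a b - W₁ a b) x y
        = stepping P W₂ x y - stepping P W₁ x y :=
      stepping_sub P W₂ W₁ hpieceW₂ hpieceW₁ x y
    have h2 : stepping P W₂ x y = W₂ x y :=
      stepping_eq P hPm hPsub hPpos hcover hdisj W₂ hW₂step (hS hx) (hT hy)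
    rw [hW'def]
    linarith [h1, h2]
  have hvolST : volume (S ×ˢ T) ≠ ⊤ := by
    refine ne_top_of_le_ne_top ?_ (measure_mono (Set.prod_mono hS hT))
    rw [Measure.volume_eq_prod, Measure.prod_prod]
    simp [Real.volume_Icc]
  have hstepfun : (fun p : ℝ × ℝ => stepping P W' p.1 p.2)
      = fun p : ℝ × ℝ => ∑ A ∈ P, ∑ B ∈ P, (A ×ˢ B).indicator
          (fun _ => (∫ s in A, ∫ t in B, W' s t) /
            ((volume A).toReal * (volume B).toReal)) p := by
    funext p
    simp only [stepping]
    refine Finset.sum_congr rfl fun A hA => Finset.sum_congr rfl fun B hB => ?_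
    by_cases h : p.1 ∈ A ∧ p.2 ∈ B
    · simp [Set.indicator_apply, Set.mem_prod, h.1, h.2]
    · simp [Set.indicator_apply, Set.mem_prod, h]
  have hstepint : IntegrableOn (fun p : ℝ × ℝ => stepping P W' p.1 p.2) (S ×ˢ T) := by
    rw [hstepfun]
    refine integrable_finset_sum _ fun A hA => integrable_finset_sum _ fun B hB => ?_
    exact (integrableOn_const hvolST).indicator ((hPm A hA).prod (hPm B hB))
  have heq1 : ∫ x in S, ∫ y in T, (W₁ x y - stepping P W₁ x y)
      = (∫ x in S, ∫ y in T, (W₁ x y - W₂ x y)) + ∫ x in S, ∫ y in T, stepping P W' x y := by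
    have e1 : ∫ x in S, ∫ y in T, (W₁ x y - stepping P W₁ x y)
        = ∫ x in S, ∫ y in T, ((W₁ x y - W₂ x y) + stepping P W' x y) :=
      setIntegral_congr_fun hSm fun x hx =>
        setIntegral_congr_fun hTm fun y hy => hptw x hx y hy
    rw [e1]
    exact iter_add (hUint.mono_set (Set.prod_mono hS hT)) hstepint
  rw [heq1]
  have t1 : |∫ x in S, ∫ y in T, (W₁ x y - W₂ x y)| ≤ cutNorm (fun x y => W₁ x y - W₂ x y) :=
    le_cutNorm (fun x y => W₁ x y - W₂ x y) hUint hS hT hSm hTm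
  have hA0 : ∀ A ∈ P, (0:ℝ) < (volume A).toReal := fun A hA =>
    ENNReal.toReal_pos (hPpos A hA).ne' (vol_ne_top (hPsub A hA))
  have t2 : |∫ x in S, ∫ y in T, stepping P W' x y|
      ≤ cutNorm (fun x y => W₁ x y - W₂ x y) := by
    rw [stepping_setIntegral P hPm W' (vol_ne_top hS) (vol_ne_top hT)]
    have hrewrite : ∑ A ∈ P, ∑ B ∈ P, (volume (A ∩ S)).toReal * ((volume (B ∩ T)).toReal *
          ((∫ s in A, ∫ t in B, W' s t) / ((volume A).toReal * (volume B).toReal)))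
        = ∑ A ∈ P, ((volume (A ∩ S)).toReal / (volume A).toReal) *
            (∑ B ∈ P, ((volume (B ∩ T)).toReal / (volume B).toReal) *
              (∫ s in A, ∫ t in B, W' s t)) := by
      refine Finset.sum_congr rfl fun A hA => ?_
      rw [Finset.mul_sum]
      refine Finset.sum_congr rfl fun B hB => ?_
      have h1 := (hA0 A hA).ne'
      have h2 := (hA0 B hB).ne'
      field_simp
    rw [hrewrite]
    have hlam : ∀ A ∈ P, (volume (A ∩ S)).toReal / (volume A).toReal ∈ Set.Icc (0:ℝ) 1 := by
      intro A hA
      refine ⟨div_nonneg ENNReal.toReal_nonneg ENNReal.toReal_nonneg, ?_⟩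
      rw [div_le_one (hA0 A hA)]
      exact ENNReal.toReal_mono (vol_ne_top (hPsub A hA)) (measure_mono Set.inter_subset_left)
    have hmu : ∀ B ∈ P, (volume (B ∩ T)).toReal / (volume B).toReal ∈ Set.Icc (0:ℝ) 1 := by
      intro B hB
      refine ⟨div_nonneg ENNReal.toReal_nonneg ENNReal.toReal_nonneg, ?_⟩
      rw [div_le_one (hA0 B hB)]
      exact ENNReal.toReal_mono (vol_ne_top (hPsub B hB)) (measure_mono Set.inter_subset_left)
    obtain ⟨Q, hQ, h1⟩ := vertex
      (fun A => ∑ B ∈ P, ((volume (B ∩ T)).toReal / (volume B).toReal) *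
        (∫ s in A, ∫ t in B, W' s t))
      (fun A => (volume (A ∩ S)).toReal / (volume A).toReal) P hlam 0
    obtain ⟨R, hR, h2⟩ := vertex
      (fun B => ∑ A ∈ Q, ∫ s in A, ∫ t in B, W' s t)
      (fun B => (volume (B ∩ T)).toReal / (volume B).toReal) P hmu 0
    have hQm : ∀ A ∈ Q, MeasurableSet A := fun A hA => hPm A (hQ hA)
    have hQs : ∀ A ∈ Q, A ⊆ Set.Icc (0:ℝ) 1 := fun A hA => hPsub A (hQ hA)
    have hQd : Set.Pairwise (↑Q) (Disjoint (α := Set ℝ)) := fun A hA B hB hne =>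
      hdisj A (hQ (Finset.mem_coe.1 hA)) B (hQ (Finset.mem_coe.1 hB)) hne
    have hRm : ∀ B ∈ R, MeasurableSet B := fun B hB => hPm B (hR hB)
    have hRs : ∀ B ∈ R, B ⊆ Set.Icc (0:ℝ) 1 := fun B hB => hPsub B (hR hB)
    have hRd : Set.Pairwise (↑R) (Disjoint (α := Set ℝ)) := fun A hA B hB hne =>
      hdisj A (hR (Finset.mem_coe.1 hA)) B (hR (Finset.mem_coe.1 hB)) hne
    have e2 : ∑ A ∈ Q, ∑ B ∈ P, ((volume (B ∩ T)).toReal / (volume B).toReal) *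
          (∫ s in A, ∫ t in B, W' s t)
        = ∑ B ∈ P, ((volume (B ∩ T)).toReal / (volume B).toReal) *
            ∑ A ∈ Q, ∫ s in A, ∫ t in B, W' s t := by
      rw [Finset.sum_comm]
      exact Finset.sum_congr rfl fun B _ => (Finset.mul_sum _ _ _).symm
    have e3 := iter_biUnion' W' hW'int Q R hQm hQs hQd hRm hRs hRd
    have e4 : ∫ x in ⋃ A ∈ Q, A, ∫ y in ⋃ B ∈ R, B, W' x y
        = - ∫ x in ⋃ A ∈ Q, A, ∫ y in ⋃ B ∈ R, B, (W₁ x y - W₂ x y) := by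
      rw [← integral_neg]
      refine integral_congr_ae (Filter.Eventually.of_forall fun x => ?_)
      show (∫ y in ⋃ B ∈ R, B, W' x y) = -∫ y in ⋃ B ∈ R, B, (W₁ x y - W₂ x y)
      rw [← integral_neg]
      refine integral_congr_ae (Filter.Eventually.of_forall fun y => ?_)
      show W' x y = -(W₁ x y - W₂ x y)
      simp only [hW'def]
      ring
    have t3 : |∫ x in ⋃ A ∈ Q, A, ∫ y in ⋃ B ∈ R, B, (W₁ x y - W₂ x y)|
        ≤ cutNorm (fun x y => W₁ x y - W₂ x y) :=
      le_cutNorm (fun x y => W₁ x y - W₂ x y) hUint (Set.iUnion₂_subset hQs) (Set.iUnion₂_subset hRs)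
        (Q.measurableSet_biUnion hQm) (R.measurableSet_biUnion hRm)
    calc |∑ A ∈ P, ((volume (A ∩ S)).toReal / (volume A).toReal) *
            (∑ B ∈ P, ((volume (B ∩ T)).toReal / (volume B).toReal) *
              (∫ s in A, ∫ t in B, W' s t))|
        = |0 + ∑ A ∈ P, ((volume (A ∩ S)).toReal / (volume A).toReal) *
            (∑ B ∈ P, ((volume (B ∩ T)).toReal / (volume B).toReal) *
              (∫ s in A, ∫ t in B, W' s t))| := by rw [zero_add]
      _ ≤ |0 + ∑ A ∈ Q, ∑ B ∈ P, ((volume (B ∩ T)).toReal / (volume B).toReal) *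
            (∫ s in A, ∫ t in B, W' s t)| := h1
      _ = |0 + ∑ B ∈ P, ((volume (B ∩ T)).toReal / (volume B).toReal) *
            ∑ A ∈ Q, ∫ s in A, ∫ t in B, W' s t| := by rw [e2]
      _ ≤ |0 + ∑ B ∈ R, ∑ A ∈ Q, ∫ s in A, ∫ t in B, W' s t| := h2
      _ = |∑ A ∈ Q, ∑ B ∈ R, ∫ s in A, ∫ t in B, W' s t| := by
          rw [zero_add, Finset.sum_comm]
      _ = |∫ x in ⋃ A ∈ Q, A, ∫ y in ⋃ B ∈ R, B, W' x y| := by rw [e3]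
      _ = |∫ x in ⋃ A ∈ Q, A, ∫ y in ⋃ B ∈ R, B, (W₁ x y - W₂ x y)| := by
          rw [e4, abs_neg]
      _ ≤ cutNorm (fun x y => W₁ x y - W₂ x y) := t3
  calc |(∫ x in S, ∫ y in T, (W₁ x y - W₂ x y)) + ∫ x in S, ∫ y in T, stepping P W' x y|
      ≤ |∫ x in S, ∫ y in T, (W₁ x y - W₂ x y)| +
        |∫ x in S, ∫ y in T, stepping P W' x y| := abs_add_le _ _
    _ ≤ 2 * cutNorm (fun x y => W₁ x y - W₂ x y) := by linarith
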